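/- Let β°_{n,k} satisfy β°_{n,k} = n·β°_{n-1,k} + (2n+k-1)·β°_{n-1,k-1} - (n-k+1)·β°_{n-1,k-2} with β°_{0,0}=1 and β°_{n,k}=0 unless 0 ≤ k ≤ n. Then β°_{n,k} > 0 for all 0 ≤ k ≤ n, and for each n the sequence β°_{n,0}, β°_{n,1}, ..., β°_{n,n} is log-concave: β°_{n,k-1}·β°_{n,k+1} ≤ (β°_{n,k})² for 1 ≤ k ≤ n-1. -/

import Mathlib

noncomputable def ch (j m : ℤ) : ℝ :=
  if 0 ≤ m ∧ m ≤ j then ((j.toNat).choose m.toNat : ℝ) else 0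

lemma ch_nonneg (j m : ℤ) : 0 ≤ ch j m := by
  unfold ch; split <;> positivity

lemma ch_of_neg {j m : ℤ} (h : m < 0) : ch j m = 0 := by
  unfold ch; rw [if_neg (by omega)]

lemma ch_of_gt {j m : ℤ} (h : j < m) : ch j m = 0 := by
  unfold ch; rw [if_neg (by omega)]

lemma ch_pos (j m : ℤ) (h0 : 0 ≤ m) (h1 : m ≤ j) : 0 < ch j m := by
  unfold ch
  rw [if_pos ⟨h0, h1⟩]
  have : m.toNat ≤ j.toNat := Int.toNat_le_toNat h1
  exact_mod_cast Nat.choose_pos this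

lemma ch_pascal (j m : ℤ) (hj : 0 ≤ j) : ch (j + 1) m = ch j m + ch j (m - 1) := by
  rcases lt_or_ge m 0 with hm | hm
  · rw [ch_of_neg hm, ch_of_neg hm, ch_of_neg (by omega)]; ring
  rcases eq_or_lt_of_le hm with rfl | hm1
  · rw [ch_of_neg (by omega : (0:ℤ)-1 < 0)]
    unfold ch
    rw [if_pos ⟨le_refl _, by omega⟩, if_pos ⟨le_refl _, hj⟩]
    simp
  -- 1 ≤ m
  rcases lt_or_ge j m with hjm | hjm
  · rcases eq_or_lt_of_le (by omega : j + 1 ≤ m) with he | hl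
    · rw [ch_of_gt (by omega : j < m), ← he]
      unfold ch
      rw [if_pos ⟨by omega, by omega⟩, if_pos ⟨by omega, by omega⟩]
      have h1 : (j+1).toNat = j.toNat + 1 := by omega
      have h3 : (j+1-1).toNat = j.toNat := by omega
      rw [h1, h3]
      simp
    · rw [ch_of_gt (by omega : j + 1 < m), ch_of_gt (by omega : j < m),
        ch_of_gt (by omega : j < m - 1)]
      ring
  · -- 1 ≤ m ≤ j
    unfold ch
    rw [if_pos ⟨hm, by omega⟩, if_pos ⟨hm, hjm⟩, if_pos ⟨by omega, by omega⟩]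
    have h1 : (j+1).toNat = j.toNat + 1 := by omega
    have h2 : m.toNat = (m-1).toNat + 1 := by omega
    rw [h1, h2, Nat.choose_succ_succ']
    push_cast
    ring

lemma ch_absorb (j m : ℤ) (hj : 0 ≤ j) :
    (m + 1) * ch j (m + 1) = (j - m) * ch j m := by
  rcases lt_or_ge m (-1) with hm | hm
  · rw [ch_of_neg (by omega), ch_of_neg (by omega)]; ring
  rcases eq_or_lt_of_le hm with rfl | hm1
  · rw [ch_of_neg (by omega : (-1:ℤ) < 0)]; ring
  have hm0 : 0 ≤ m := by omega
  rcases lt_or_ge j m with hjm | hjm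
  · rw [ch_of_gt (by omega), ch_of_gt (by omega)]; ring
  rcases eq_or_lt_of_le hjm with rfl | hjm1
  · rw [ch_of_gt (by omega)]
    unfold ch
    rw [if_pos ⟨hm0, le_refl _⟩]
    simp
  · -- 0 ≤ m, m + 1 ≤ j
    unfold ch
    rw [if_pos ⟨by omega, by omega⟩, if_pos ⟨hm0, by omega⟩]
    have h2 : (m+1).toNat = m.toNat + 1 := by omega
    rw [h2]
    have hle : m.toNat + 1 ≤ j.toNat := by omega
    have key := Nat.choose_succ_right_eq j.toNat m.toNat
    have hcast : (j.toNat.choose (m.toNat+1) : ℝ) * ((m.toNat:ℝ)+1)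
        = (j.toNat.choose m.toNat : ℝ) * ((j.toNat:ℝ) - (m.toNat:ℝ)) := by
      have := congrArg (fun x : ℕ => (x : ℝ)) key
      push_cast [Nat.cast_sub (by omega : m.toNat ≤ j.toNat)] at this
      linarith [this]
    have hj' : ((j.toNat:ℝ)) = (j:ℝ) := by exact_mod_cast Int.toNat_of_nonneg hj
    have hm' : ((m.toNat:ℝ)) = (m:ℝ) := by exact_mod_cast Int.toNat_of_nonneg hm0
    rw [hj', hm'] at hcast
    linarith [hcast]

lemma ch_minor (u v m : ℤ) (hu : 0 ≤ u) (huv : u ≤ v) :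
    ch u (m + 1) * ch v m ≤ ch u m * ch v (m + 1) := by
  rcases lt_or_ge m 0 with hm | hm
  · rw [ch_of_neg hm, ch_of_neg hm]; simp
  · have hv : 0 ≤ v := le_trans hu huv
    have ha1 := ch_absorb u m hu
    have ha2 := ch_absorb v m hv
    have hpos : (0:ℝ) < (m:ℝ) + 1 := by
      have : (0:ℝ) ≤ (m:ℝ) := by exact_mod_cast hm
      linarith
    rw [← mul_le_mul_iff_right₀ hpos]
    have e1 : ((m:ℝ)+1) * (ch u (m+1) * ch v m) = ((m+1) * ch u (m+1)) * ch v m := by ring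
    have e2 : ((m:ℝ)+1) * (ch u m * ch v (m+1)) = ch u m * ((m+1) * ch v (m+1)) := by ring
    push_cast at e1 e2
    rw [e1, e2, ha1, ha2]
    have h1 : (0:ℝ) ≤ ch u m * ch v m := mul_nonneg (ch_nonneg _ _) (ch_nonneg _ _)
    have h2 : ((u:ℝ) - m) ≤ ((v:ℝ) - m) := by
      have : (u:ℝ) ≤ (v:ℝ) := by exact_mod_cast huv
      linarith
    nlinarith [h1, h2]


noncomputable def cc : ℕ → ℤ → ℝ
  | 0, j => if j = 0 then 1 else 0
  | (n+1), j => ((n:ℝ)+1) * cc n (j-1) + (2*(n:ℝ)+1-(j:ℝ)) * cc n j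

lemma cc_succ (n : ℕ) (j : ℤ) :
    cc (n+1) j = ((n:ℝ)+1) * cc n (j-1) + (2*(n:ℝ)+1-(j:ℝ)) * cc n j := rfl

lemma cc_zero_of_ne {j : ℤ} (h : j ≠ 0) : cc 0 j = 0 := by
  simp only [cc]; rw [if_neg h]

lemma cc_of_neg : ∀ (n : ℕ) {j : ℤ}, j < 0 → cc n j = 0 := by
  intro n
  induction n with
  | zero => intro j hj; exact cc_zero_of_ne (by omega)
  | succ n ih =>
    intro j hj
    rw [cc_succ, ih (by omega : j - 1 < 0), ih hj]
    ring

lemma cc_of_gt : ∀ (n : ℕ) {j : ℤ}, (n:ℤ) < j → cc n j = 0 := by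
  intro n
  induction n with
  | zero => intro j hj; exact cc_zero_of_ne (by omega)
  | succ n ih =>
    intro j hj
    push_cast at hj
    rw [cc_succ, ih (by omega : (n:ℤ) < j - 1), ih (by omega : (n:ℤ) < j)]
    ring

lemma cc_nonneg : ∀ (n : ℕ) (j : ℤ), 0 ≤ cc n j := by
  intro n
  induction n with
  | zero => intro j; simp only [cc]; split <;> norm_num
  | succ n ih =>
    intro j
    rcases le_or_gt j (2*(n:ℤ)+1) with hj | hj
    · rw [cc_succ]
      have h2 : (0:ℝ) ≤ 2*(n:ℝ)+1-(j:ℝ) := by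
        have : (j:ℝ) ≤ 2*(n:ℝ)+1 := by exact_mod_cast hj
        linarith
      have i1 := ih (j-1); have i2 := ih j
      have h1 : (0:ℝ) ≤ (n:ℝ)+1 := by positivity
      nlinarith
    · rw [cc_succ, cc_of_gt n (by omega : (n:ℤ) < j), cc_of_gt n (by omega : (n:ℤ) < j - 1)]
      simp

lemma cc_pos : ∀ (n : ℕ) (j : ℤ), 0 ≤ j → j ≤ (n:ℤ) → 0 < cc n j := by
  intro n
  induction n with
  | zero => intro j h0 h1; simp only [cc]; rw [if_pos (by omega)]; norm_num
  | succ n ih =>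
    intro j h0 h1
    rw [cc_succ]
    push_cast at h1
    have hjr : (j:ℝ) ≤ (n:ℝ)+1 := by exact_mod_cast h1
    rcases eq_or_lt_of_le h0 with rfl | hj0
    · rw [cc_of_neg n (by omega : (0:ℤ)-1 < 0)]
      have h := ih 0 le_rfl (Int.natCast_nonneg n)
      have : (0:ℝ) < 2*(n:ℝ)+1-((0:ℤ):ℝ) := by norm_num; positivity
      nlinarith
    · have hp1 : 0 < cc n (j-1) := ih (j-1) (by omega) (by omega)
      have hp2 : 0 ≤ cc n j := cc_nonneg n j
      have hc2 : (0:ℝ) ≤ 2*(n:ℝ)+1-(j:ℝ) := by linarith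
      nlinarith

lemma toeplitz_aux (a : ℤ → ℝ) (d : ℤ)
    (hnn : ∀ j, 0 ≤ a j)
    (hpos : ∀ j, 0 ≤ j → j ≤ d → 0 < a j)
    (hneg : ∀ j, j < 0 → a j = 0)
    (hgt : ∀ j, d < j → a j = 0)
    (hlc : ∀ j, a (j-1) * a (j+1) ≤ a j * a j) :
    ∀ i j, i ≤ j → a (i-1) * a (j+1) ≤ a i * a j := by
  have H : ∀ g : ℕ, ∀ i : ℤ, a (i-1) * a (i+g+1) ≤ a i * a (i+g) := by
    intro g
    induction g with
    | zero => intro i; simpa using hlc i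
    | succ g ih =>
      intro i
      rw [show i + ((g:ℕ)+1 : ℕ) + 1 = i + (g:ℤ) + 1 + 1 by push_cast; ring,
          show i + ((g:ℕ)+1 : ℕ) = i + (g:ℤ) + 1 by push_cast; ring]
      rcases lt_or_ge (i-1) 0 with hb | hb
      · rw [hneg _ hb]
        simpa using mul_nonneg (hnn i) (hnn (i+g+1))
      rcases lt_or_ge d (i+(g:ℤ)+1+1) with ht | ht
      · rw [hgt _ ht]
        simpa using mul_nonneg (hnn i) (hnn (i+(g:ℤ)+1))
      have hIH := ih i
      have hd := hlc (i+g+1)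
      rw [show i+(g:ℤ)+1-1 = i+g by ring, show i+(g:ℤ)+1+1 = i+g+1+1 by ring] at hd
      have p1 : 0 < a (i+g) := hpos _ (by omega) (by omega)
      have p2 : 0 < a (i+g+1) := hpos _ (by omega) (by omega)
      have m1 : (a (i-1) * a (i+g+1)) * (a (i+g) * a (i+g+1+1)) ≤
          (a i * a (i+g)) * (a (i+g+1) * a (i+g+1)) := by
        apply mul_le_mul hIH hd (mul_nonneg (hnn _) (hnn _))
        exact mul_nonneg (hnn _) (hnn _)
      have hpp : 0 < a (i+g) * a (i+g+1) := mul_pos p1 p2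
      have goal' : a (i-1) * a (i+(g:ℤ)+1+1) * (a (i+g) * a (i+g+1)) ≤
          a i * a (i+(g:ℤ)+1) * (a (i+g) * a (i+g+1)) := by nlinarith [m1]
      exact le_of_mul_le_mul_right goal' hpp
  intro i j hij
  obtain ⟨g, hg⟩ := Int.le.dest hij
  have h := H g i
  rw [hg] at h
  exact h

lemma cc_lc : ∀ (n : ℕ) (j : ℤ), cc n (j-1) * cc n (j+1) ≤ cc n j * cc n j := by
  intro n
  induction n with
  | zero =>
    intro j
    have hz : cc 0 (j-1) * cc 0 (j+1) = 0 := by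
      rcases eq_or_ne (j-1) 0 with he | hne
      · rw [cc_zero_of_ne (by omega : j+1 ≠ 0)]; ring
      · rw [cc_zero_of_ne hne]; ring
    rw [hz]
    exact mul_self_nonneg _
  | succ n ih =>
    intro j
    have toep := toeplitz_aux (cc n) n (cc_nonneg n) (fun j h0 h1 => cc_pos n j h0 h1)
      (fun j h => cc_of_neg n h) (fun j h => cc_of_gt n h) ih
    rcases lt_or_ge (j-1) 0 with hb | hb
    · have h0 : cc (n+1) (j-1) = 0 := by
        rw [cc_succ, cc_of_neg n (by omega : j-1-1 < 0), cc_of_neg n hb]; ring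
      rw [h0]
      simpa using mul_self_nonneg (cc (n+1) j)
    rcases lt_or_ge ((n:ℤ)+1) (j+1) with ht | ht
    · have h0 : cc (n+1) (j+1) = 0 := cc_of_gt (n+1) (by push_cast; omega)
      rw [h0]
      simpa using mul_self_nonneg (cc (n+1) j)
    -- 1 ≤ j ≤ n
    rw [cc_succ, cc_succ, cc_succ]
    rw [show j-1-1 = j-2 by ring, show j+1-1 = j by ring]
    have h1 := ih (j-1)
    rw [show j-1-1 = j-2 by ring, show j-1+1 = j by ring] at h1
    have h2 := toep (j-1) j (by omega)
    rw [show j-1-1 = j-2 by ring] at h2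
    have h3 := ih j
    have h4 : (0:ℝ) ≤ cc n (j-1) * cc n (j+1) := mul_nonneg (cc_nonneg _ _) (cc_nonneg _ _)
    have cN : (0:ℝ) ≤ (n:ℝ)+1 := by positivity
    have cg : (0:ℝ) ≤ 2*(n:ℝ) - (j:ℝ) := by
      have : (j:ℝ) ≤ (n:ℝ) := by exact_mod_cast (by omega : j ≤ (n:ℤ))
      have : (0:ℝ) ≤ (n:ℝ) := by positivity
      linarith
    have t1 := mul_le_mul_of_nonneg_left h1 (by positivity : (0:ℝ) ≤ ((n:ℝ)+1)^2)
    have t2 := mul_le_mul_of_nonneg_left h2 (mul_nonneg cN cg)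
    have t3 := mul_le_mul_of_nonneg_left h3 (sq_nonneg (2*(n:ℝ)+1-(j:ℝ)))
    push_cast
    nlinarith [t1, t2, t3, h4]

open Finset in
lemma S_lc (n : ℕ) (m : ℤ) :
    (∑ j ∈ Finset.Icc (0:ℤ) (n:ℤ), cc n j * ch j (m-1)) *
    (∑ j ∈ Finset.Icc (0:ℤ) (n:ℤ), cc n j * ch j (m+1)) ≤
    (∑ j ∈ Finset.Icc (0:ℤ) (n:ℤ), cc n j * ch j m) *
    (∑ j ∈ Finset.Icc (0:ℤ) (n:ℤ), cc n j * ch j m) := by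
  have toep := toeplitz_aux (cc n) n (cc_nonneg n) (fun j h0 h1 => cc_pos n j h0 h1)
      (fun j h => cc_of_neg n h) (fun j h => cc_of_gt n h) (cc_lc n)
  set I := Finset.Icc (0:ℤ) (n:ℤ) with hI
  set P1 := Finset.Icc (0:ℤ) ((n:ℤ)+1) with hP1
  set P2 := Finset.Icc (-1:ℤ) (n:ℤ) with hP2
  set c := cc n with hc
  set K : ℤ → ℤ → ℝ := fun a b => ch a m * ch (b+1) (m+1) - ch a (m+1) * ch (b+1) m with hK
  -- step 1
  have h1 : (∑ j ∈ I, c j * ch j m) * (∑ j ∈ I, c j * ch j m)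
      - (∑ j ∈ I, c j * ch j (m-1)) * (∑ j ∈ I, c j * ch j (m+1))
      = ∑ i ∈ I, ∑ j ∈ I, c i * c j * (ch i m * ch j m - ch i (m-1) * ch j (m+1)) := by
    rw [Finset.sum_mul_sum, Finset.sum_mul_sum, ← Finset.sum_sub_distrib]
    refine Finset.sum_congr rfl fun i _ => ?_
    rw [← Finset.sum_sub_distrib]
    exact Finset.sum_congr rfl fun j _ => by ring
  -- symmetrize
  have hsym : ∑ i ∈ I, ∑ j ∈ I, c i * c j * (ch i m * ch j m - ch i (m-1) * ch j (m+1))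
      = ∑ i ∈ I, ∑ j ∈ I, c i * c j * (ch j m * ch i m - ch j (m-1) * ch i (m+1)) := by
    rw [Finset.sum_comm]
    exact Finset.sum_congr rfl fun j _ => Finset.sum_congr rfl fun i _ => by ring
  -- doubled sum with K
  have h2 : (∑ i ∈ I, ∑ j ∈ I, c i * c j * (ch i m * ch j m - ch i (m-1) * ch j (m+1))) * 2
      = ∑ i ∈ I, ∑ j ∈ I, c i * c j * (K i j - K (i+1) (j-1)) := by
    have e : (∑ i ∈ I, ∑ j ∈ I, c i * c j * (ch i m * ch j m - ch i (m-1) * ch j (m+1))) * 2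
        = (∑ i ∈ I, ∑ j ∈ I, c i * c j * (ch i m * ch j m - ch i (m-1) * ch j (m+1)))
          + (∑ i ∈ I, ∑ j ∈ I, c i * c j * (ch j m * ch i m - ch j (m-1) * ch i (m+1))) := by
      rw [← hsym]; ring
    rw [e, ← Finset.sum_add_distrib]
    refine Finset.sum_congr rfl fun i hi => ?_
    rw [← Finset.sum_add_distrib]
    refine Finset.sum_congr rfl fun j hj => ?_
    have hi0 : 0 ≤ i := (Finset.mem_Icc.mp hi).1
    have hj0 : 0 ≤ j := (Finset.mem_Icc.mp hj).1
    have key : (ch i m * ch j m - ch i (m-1) * ch j (m+1))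
        + (ch j m * ch i m - ch j (m-1) * ch i (m+1)) = K i j - K (i+1) (j-1) := by
      simp only [hK]
      rw [show j - 1 + 1 = j by ring]
      rw [ch_pascal j m hj0, ch_pascal j (m+1) hj0, ch_pascal i m hi0, ch_pascal i (m+1) hi0]
      rw [show m + 1 - 1 = m by ring]
      ring
    rw [← key]; ring
  -- split
  have h3 : ∑ i ∈ I, ∑ j ∈ I, c i * c j * (K i j - K (i+1) (j-1))
      = (∑ i ∈ I, ∑ j ∈ I, c i * c j * K i j)
        - (∑ i ∈ I, ∑ j ∈ I, c i * c j * K (i+1) (j-1)) := by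
    rw [← Finset.sum_sub_distrib]
    refine Finset.sum_congr rfl fun i _ => ?_
    rw [← Finset.sum_sub_distrib]
    exact Finset.sum_congr rfl fun j _ => by ring
  -- extend first sum to P1 × P2
  have h4 : (∑ i ∈ I, ∑ j ∈ I, c i * c j * K i j)
      = ∑ i ∈ P1, ∑ j ∈ P2, c i * c j * K i j := by
    have inner : ∀ i : ℤ, (∑ j ∈ I, c i * c j * K i j) = ∑ j ∈ P2, c i * c j * K i j := by
      intro i
      apply Finset.sum_subset
      · intro x hx; simp only [hI, hP2, Finset.mem_Icc] at hx ⊢; omega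
      · intro x hx hnx
        have : x < 0 := by simp only [hI, hP2, Finset.mem_Icc] at hx hnx; omega
        rw [hc, cc_of_neg n this]; ring
    rw [Finset.sum_congr rfl fun i _ => inner i]
    apply Finset.sum_subset
    · intro x hx; simp only [hI, hP1, Finset.mem_Icc] at hx ⊢; omega
    · intro x hx hnx
      have : (n:ℤ) < x := by simp only [hI, hP1, Finset.mem_Icc] at hx hnx; omega
      refine Finset.sum_eq_zero fun j _ => ?_
      rw [hc, cc_of_gt n this]; ring
  -- reindex second sum
  have h5 : (∑ i ∈ I, ∑ j ∈ I, c i * c j * K (i+1) (j-1))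
      = ∑ i ∈ P1, ∑ j ∈ P2, c (i-1) * c (j+1) * K i j := by
    have inner : ∀ i : ℤ, (∑ j ∈ I, c i * c j * K (i+1) (j-1))
        = ∑ j ∈ P2, c i * c (j+1) * K (i+1) j := by
      intro i
      have step1 : (∑ j ∈ I, c i * c j * K (i+1) (j-1))
          = ∑ j ∈ Finset.Icc (-1:ℤ) ((n:ℤ)-1), c i * c (j+1) * K (i+1) j := by
        refine Finset.sum_bij' (fun j _ => j - 1) (fun j _ => j + 1) ?_ ?_ ?_ ?_ ?_
        · intro a ha; simp only [hI, Finset.mem_Icc] at ha ⊢; omega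
        · intro a ha; simp only [hI, Finset.mem_Icc] at ha ⊢; omega
        · intro a ha; ring
        · intro a ha; ring
        · intro a ha; rw [show a - 1 + 1 = a by ring]
      rw [step1]
      apply Finset.sum_subset
      · intro x hx; simp only [hP2, Finset.mem_Icc] at hx ⊢; omega
      · intro x hx hnx
        have : (n:ℤ) < x + 1 := by simp only [hP2, Finset.mem_Icc] at hx hnx; omega
        rw [hc, cc_of_gt n this]; ring
    rw [Finset.sum_congr rfl fun i _ => inner i]
    have outer : (∑ i ∈ I, ∑ j ∈ P2, c i * c (j+1) * K (i+1) j)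
        = ∑ i ∈ Finset.Icc (1:ℤ) ((n:ℤ)+1), ∑ j ∈ P2, c (i-1) * c (j+1) * K i j := by
      refine Finset.sum_bij' (fun i _ => i + 1) (fun i _ => i - 1) ?_ ?_ ?_ ?_ ?_
      · intro a ha; simp only [hI, Finset.mem_Icc] at ha ⊢; omega
      · intro a ha; simp only [hI, Finset.mem_Icc] at ha ⊢; omega
      · intro a ha; ring
      · intro a ha; ring
      · intro a ha
        refine Finset.sum_congr rfl fun j _ => ?_
        rw [show a + 1 - 1 = a by ring]
    rw [outer]
    apply Finset.sum_subset
    · intro x hx; simp only [hP1, Finset.mem_Icc] at hx ⊢; omega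
    · intro x hx hnx
      have : x - 1 < 0 := by simp only [hP1, Finset.mem_Icc] at hx hnx; omega
      refine Finset.sum_eq_zero fun j _ => ?_
      rw [hc, cc_of_neg n this]; ring
  -- nonnegativity of the certificate sum
  have h6 : 0 ≤ ∑ i ∈ P1, ∑ j ∈ P2, (c i * c j - c (i-1) * c (j+1)) * K i j := by
    refine Finset.sum_nonneg fun i hi => Finset.sum_nonneg fun j hj => ?_
    simp only [hP1, hP2, Finset.mem_Icc] at hi hj
    rcases le_or_gt i j with hij | hij
    · have hK0 : 0 ≤ K i j := by
        have := ch_minor i (j+1) m hi.1 (by omega)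
        simp only [hK]; linarith
      have hm0 : 0 ≤ c i * c j - c (i-1) * c (j+1) := by
        have := toep i j hij
        linarith
      exact mul_nonneg hm0 hK0
    rcases eq_or_lt_of_le (by omega : j + 1 ≤ i) with rfl | hij2
    · have : K (j+1) j = 0 := by simp only [hK]; ring
      rw [this]; simp
    · have hK0 : K i j ≤ 0 := by
        have := ch_minor (j+1) i m (by omega) (by omega)
        simp only [hK]; linarith
      have hm0 : c i * c j - c (i-1) * c (j+1) ≤ 0 := by
        have := toep (j+1) (i-1) (by omega)
        rw [show j + 1 - 1 = j by ring, show i - 1 + 1 = i by ring] at this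
        linarith
      nlinarith [hm0, hK0]
  -- combine
  have h7 : (∑ i ∈ P1, ∑ j ∈ P2, c i * c j * K i j)
      - (∑ i ∈ P1, ∑ j ∈ P2, c (i-1) * c (j+1) * K i j)
      = ∑ i ∈ P1, ∑ j ∈ P2, (c i * c j - c (i-1) * c (j+1)) * K i j := by
    rw [← Finset.sum_sub_distrib]
    refine Finset.sum_congr rfl fun i _ => ?_
    rw [← Finset.sum_sub_distrib]
    exact Finset.sum_congr rfl fun j _ => by ring
  nlinarith [h1, h2, h3, h4, h5, h6, h7]

noncomputable def M (n : ℕ) (k : ℤ) : ℝ :=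
  ∑ j ∈ Finset.Icc (0:ℤ) (n:ℤ), cc n j * ch j ((n:ℤ) - k)

lemma M_zero (k : ℤ) : M 0 k = if k = 0 then 1 else 0 := by
  unfold M
  rw [show ((0:ℕ):ℤ) = (0:ℤ) by norm_num, Finset.Icc_self, Finset.sum_singleton]
  have h0 : cc 0 0 = 1 := by simp [cc]
  rw [h0, one_mul]
  rcases eq_or_ne k 0 with rfl | hk
  · rw [if_pos rfl]
    unfold ch
    norm_num
  · rw [if_neg hk]
    rcases lt_or_gt_of_ne hk with h | h
    · exact ch_of_gt (by omega)
    · exact ch_of_neg (by omega)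

lemma M_rec (n : ℕ) (k : ℤ) :
    M (n+1) k = ((n:ℝ)+1) * M n k + (2*((n:ℝ)+1) + (k:ℝ) - 1) * M n (k-1)
      - (((n:ℝ)+1) - (k:ℝ) + 1) * M n (k-2) := by
  set m : ℤ := (n:ℤ) - k with hm
  have hcast : ((n+1:ℕ):ℤ) = (n:ℤ)+1 := by push_cast; ring
  have e1 : ((n+1:ℕ):ℤ) - k = m + 1 := by omega
  have e2 : (n:ℤ) - (k-1) = m + 1 := by omega
  have e3 : (n:ℤ) - (k-2) = m + 2 := by omega
  unfold M
  rw [e1, e2, e3, hcast]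
  -- expand cc (n+1)
  have expand : ∑ j ∈ Finset.Icc (0:ℤ) ((n:ℤ)+1), cc (n+1) j * ch j (m+1)
      = (∑ j ∈ Finset.Icc (0:ℤ) ((n:ℤ)+1), ((n:ℝ)+1) * cc n (j-1) * ch j (m+1))
        + ∑ j ∈ Finset.Icc (0:ℤ) ((n:ℤ)+1), (2*(n:ℝ)+1-(j:ℝ)) * cc n j * ch j (m+1) := by
    rw [← Finset.sum_add_distrib]
    refine Finset.sum_congr rfl fun j _ => ?_
    rw [cc_succ]; ring
  have sumA1 : (∑ j ∈ Finset.Icc (0:ℤ) ((n:ℤ)+1), ((n:ℝ)+1) * cc n (j-1) * ch j (m+1))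
      = ∑ j ∈ Finset.Icc (-1:ℤ) (n:ℤ), ((n:ℝ)+1) * cc n j * ch (j+1) (m+1) := by
    refine Finset.sum_bij' (fun j _ => j - 1) (fun j _ => j + 1) ?_ ?_ ?_ ?_ ?_
    · intro a ha; simp only [Finset.mem_Icc] at ha ⊢; omega
    · intro a ha; simp only [Finset.mem_Icc] at ha ⊢; omega
    · intro a _; ring
    · intro a _; ring
    · intro a _; rw [show a - 1 + 1 = a by ring]
  have sumA2 : (∑ j ∈ Finset.Icc (-1:ℤ) (n:ℤ), ((n:ℝ)+1) * cc n j * ch (j+1) (m+1))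
      = ∑ j ∈ Finset.Icc (0:ℤ) (n:ℤ), ((n:ℝ)+1) * cc n j * ch (j+1) (m+1) := by
    symm
    apply Finset.sum_subset
    · intro x hx; simp only [Finset.mem_Icc] at hx ⊢; omega
    · intro x hx hnx
      have : x < 0 := by simp only [Finset.mem_Icc] at hx hnx; omega
      rw [cc_of_neg n this]; ring
  have sumB : (∑ j ∈ Finset.Icc (0:ℤ) ((n:ℤ)+1), (2*(n:ℝ)+1-(j:ℝ)) * cc n j * ch j (m+1))
      = ∑ j ∈ Finset.Icc (0:ℤ) (n:ℤ), (2*(n:ℝ)+1-(j:ℝ)) * cc n j * ch j (m+1) := by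
    symm
    apply Finset.sum_subset
    · intro x hx; simp only [Finset.mem_Icc] at hx ⊢; omega
    · intro x hx hnx
      have : (n:ℤ) < x := by simp only [Finset.mem_Icc] at hx hnx; omega
      rw [cc_of_gt n this]; ring
  rw [expand, sumA1, sumA2, sumB, ← hm, Finset.mul_sum, Finset.mul_sum, Finset.mul_sum,
    ← Finset.sum_add_distrib, ← Finset.sum_add_distrib, ← Finset.sum_sub_distrib]
  refine Finset.sum_congr rfl fun j hj => ?_
  have hj0 : 0 ≤ j := (Finset.mem_Icc.mp hj).1
  have hp := ch_pascal j (m+1) hj0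
  rw [show m + 1 - 1 = m by ring] at hp
  have ha := ch_absorb j (m+1) hj0
  rw [show m + 1 + 1 = m + 2 by ring] at ha
  have hkr : (k:ℝ) = (n:ℝ) - (m:ℝ) := by
    have : (m:ℝ) = (n:ℝ) - (k:ℝ) := by exact_mod_cast congrArg (fun x : ℤ => (x:ℝ)) hm
    linarith
  rw [hp, hkr]
  push_cast at ha ⊢
  linear_combination (cc n j) * ha


theorem lambert_triangle_positive_and_log_concave
    (B : ℕ → ℤ → ℝ)
    (hB0 : B 0 0 = 1)
    (hBb : ∀ (n : ℕ) (k : ℤ), (k < 0 ∨ (n : ℤ) < k) → B n k = 0)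
    (hBrec : ∀ (n : ℕ) (k : ℤ),
      B (n + 1) k =
        ((n : ℝ) + 1) * B n k + (2 * ((n : ℝ) + 1) + (k : ℝ) - 1) * B n (k - 1) -
          ((n : ℝ) + 1 - (k : ℝ) + 1) * B n (k - 2)) :
    (∀ n k : ℕ, k ≤ n → 0 < B n (k : ℤ)) ∧
    (∀ n k : ℕ, 1 ≤ k → k + 1 ≤ n →
      B n ((k : ℤ) - 1) * B n ((k : ℤ) + 1) ≤ (B n (k : ℤ)) ^ 2) := by
  have hBM : ∀ (n : ℕ) (k : ℤ), B n k = M n k := by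
    intro n
    induction n with
    | zero =>
      intro k
      rw [M_zero]
      rcases eq_or_ne k 0 with rfl | hk
      · rw [if_pos rfl]; exact hB0
      · rw [if_neg hk]
        exact hBb 0 k (by omega)
    | succ n ih =>
      intro k
      rw [hBrec n k, ih k, ih (k-1), ih (k-2), M_rec]
  constructor
  · intro n k hk
    rw [hBM]
    unfold M
    apply Finset.sum_pos'
    · intro j _
      exact mul_nonneg (cc_nonneg n j) (ch_nonneg j _)
    · refine ⟨(n:ℤ), Finset.mem_Icc.mpr ⟨Int.natCast_nonneg n, le_refl _⟩, ?_⟩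
      apply mul_pos (cc_pos n n (Int.natCast_nonneg n) (le_refl _))
      apply ch_pos
      · omega
      · omega
  · intro n k hk1 hk2
    rw [hBM, hBM, hBM]
    unfold M
    set m : ℤ := (n:ℤ) - (k:ℤ) with hm
    rw [show (n:ℤ) - ((k:ℤ) - 1) = m + 1 by omega,
        show (n:ℤ) - ((k:ℤ) + 1) = m - 1 by omega, pow_two]
    rw [mul_comm]
    exact S_lc n m
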